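/- Let A be a unital complex Banach algebra with ‖1‖ = 1 and let ρ ∈ A* satisfy Re ρ(a) ≤ 0 for every dissipative a ∈ A. Then ρ is a nonnegative multiple of a state, i.e., ρ(1) ≥ 0 and |ρ(a)| ≤ ‖a‖·ρ(1) for all a ∈ A. -/

import Mathlib

/-- A state on a unital Banach algebra: a continuous linear functional `ρ`
with `‖ρ‖ = 1` and `ρ 1 = 1`. -/
def IsState {A : Type*} [NormedRing A] [NormedAlgebra ℂ A] (ρ : A →L[ℂ] ℂ) : Prop :=
  ‖ρ‖ = 1 ∧ ρ 1 = 1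

/-- An element is dissipative if `Re ρ(a) ≤ 0` for all states `ρ`. -/
def IsDissipative {A : Type*} [NormedRing A] [NormedAlgebra ℂ A] (a : A) : Prop :=
  ∀ ρ : A →L[ℂ] ℂ, IsState ρ → (ρ a).re ≤ 0

theorem stmt6 {A : Type*} [NormedRing A] [NormedAlgebra ℂ A] [NormOneClass A]
    [CompleteSpace A] (ρ : A →L[ℂ] ℂ)
    (h : ∀ a : A, IsDissipative a → (ρ a).re ≤ 0) :
    0 ≤ (ρ 1).re ∧ (ρ 1).im = 0 ∧ ∀ a : A, ‖ρ a‖ ≤ ‖a‖ * (ρ 1).re := by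
  have key : ∀ a : A, (ρ a).re ≤ ‖a‖ * (ρ 1).re := by
    intro a
    have hd : IsDissipative (a - (‖a‖ : ℂ) • (1 : A)) := by
      intro σ hσ
      have h2 : ‖σ a‖ ≤ ‖a‖ := by
        calc ‖σ a‖ = ‖σ a‖ := rfl
          _ ≤ ‖σ‖ * ‖a‖ := σ.le_opNorm a
          _ = ‖a‖ := by rw [hσ.1, one_mul]
      have h3 := Complex.re_le_norm (σ a)
      simp only [map_sub, map_smul, hσ.2, smul_eq_mul, mul_one, Complex.sub_re,
        Complex.ofReal_re]
      linarith
    have h4 := h _ hd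
    simp only [map_sub, map_smul, smul_eq_mul, Complex.sub_re, Complex.re_ofReal_mul] at h4
    linarith
  have hre : 0 ≤ (ρ 1).re := by
    have hd : IsDissipative (-(1 : A)) := by
      intro σ hσ
      simp [hσ.2]
    have := h _ hd
    simp at this
    linarith
  have him : (ρ 1).im = 0 := by
    have hd1 : IsDissipative ((Complex.I) • (1 : A)) := by
      intro σ hσ
      simp [hσ.2]
    have hd2 : IsDissipative ((-Complex.I) • (1 : A)) := by
      intro σ hσ
      simp [hσ.2]
    have h1 := h _ hd1
    have h2 := h _ hd2
    simp only [map_smul, smul_eq_mul, Complex.mul_re, Complex.I_re, Complex.I_im,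
      Complex.neg_re, Complex.neg_im, zero_mul, one_mul, neg_neg, neg_zero, neg_mul] at h1 h2
    linarith
  refine ⟨hre, him, fun a => ?_⟩
  by_cases ha : ρ a = 0
  · rw [ha]
    simp
    exact mul_nonneg (norm_nonneg a) hre
  · set c : ℂ := (starRingEnd ℂ) (ρ a) / ((‖ρ a‖ : ℝ) : ℂ) with hc
    have habs : ‖c‖ = 1 := by
      simp [hc, map_div₀, Complex.norm_conj, div_self (norm_ne_zero_iff.mpr ha)]
    have hρc : ρ (c • a) = ((‖ρ a‖ : ℝ) : ℂ) := by
      have hm : (starRingEnd ℂ) (ρ a) * ρ a = ((‖ρ a‖ : ℝ) : ℂ) ^ 2 := by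
        rw [mul_comm, Complex.mul_conj, Complex.normSq_eq_norm_sq]
        push_cast
        ring
      rw [map_smul, smul_eq_mul, hc, div_mul_eq_mul_div, hm]
      have hne : ((‖ρ a‖ : ℝ) : ℂ) ≠ 0 := by
        exact_mod_cast (norm_ne_zero_iff.mpr ha)
      field_simp
    have := key (c • a)
    rw [hρc] at this
    simp only [Complex.ofReal_re] at this
    calc ‖ρ a‖ ≤ ‖c • a‖ * (ρ 1).re := this
      _ = ‖a‖ * (ρ 1).re := by
          rw [norm_smul]
          simp [habs]
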